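/- Let J ∈ 𝒥_{k,N}. For every λ ∈ ℝ, the linear map from the eigenspace ker(J − λI) to ℂ^k sending a vector v to its first k coordinates E_1^* v is injective. Consequently, if v̂_1, …, v̂_p are linearly independent eigenvectors of J for a common eigenvalue λ, then the vectors E_1^* v̂_1, …, E_1^* v̂_p ∈ ℂ^k are linearly independent, and every eigenvalue of J has multiplicity at most k. -/

import Mathlib

open Matrix Polynomial

noncomputable section

/-- `Esel k N b` is the block selection matrix `E_{b+1} ∈ ℂ^{N×k}` whose rows
`b*k, …, b*k + (k-1)` form the identity `I_k` (zero-based indexing). -/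
def Esel (k N : ℕ) (b : ℕ) : Matrix (Fin N) (Fin k) ℂ :=
  Matrix.of fun i a => if (i : ℕ) = b * k + (a : ℕ) then 1 else 0

/-- The last (possibly smaller) block selection matrix `E_n ∈ ℂ^{N×(k-ℓ)}`. -/
def EselLast (k n ℓ : ℕ) : Matrix (Fin (n * k - ℓ)) (Fin (k - ℓ)) ℂ :=
  Matrix.of fun i a => if (i : ℕ) = (n - 1) * k + (a : ℕ) then 1 else 0

/-- A square matrix is upper triangular with (real) positive diagonal entries. -/
def UpperTriPosDiag {k : ℕ} (M : Matrix (Fin k) (Fin k) ℂ) : Prop :=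
  ∀ r c : Fin k, ((c : ℕ) < (r : ℕ) → M r c = 0) ∧ (r = c → 0 < (M r c).re ∧ (M r c).im = 0)

/-- A (rectangular) matrix is in row echelon form with positive pivots. -/
def RowEchelonPosPivots {r m : ℕ} (R : Matrix (Fin r) (Fin m) ℂ) : Prop :=
  ∃ p : Fin r → Fin m, StrictMono p ∧
    ∀ i : Fin r, (0 < (R i (p i)).re ∧ (R i (p i)).im = 0) ∧
      ∀ j : Fin m, (j : ℕ) < (p i : ℕ) → R i j = 0

/-- The class `𝒥_{k,N}` (`N = n*k - ℓ`): Hermitian block tridiagonal matrices with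
`k×k` blocks (the last diagonal block of size `(k-ℓ)×(k-ℓ)`), subdiagonal blocks
`B_0,…,B_{n-3}` upper triangular with positive diagonal and `B_{n-2}` in row echelon
form with positive pivots. -/
def IsJkN (k n ℓ : ℕ) (J : Matrix (Fin (n * k - ℓ)) (Fin (n * k - ℓ)) ℂ) : Prop :=
  J.IsHermitian ∧
  (∀ i j : Fin (n * k - ℓ),
      ((i : ℕ) / k + 2 ≤ (j : ℕ) / k ∨ (j : ℕ) / k + 2 ≤ (i : ℕ) / k) → J i j = 0) ∧
  (∀ b : ℕ, b + 3 ≤ n →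
      UpperTriPosDiag ((Esel k (n * k - ℓ) (b + 1))ᴴ * J * Esel k (n * k - ℓ) b)) ∧
  RowEchelonPosPivots ((EselLast k n ℓ)ᴴ * J * Esel k (n * k - ℓ) (n - 2))


lemma div_eq {k : ℕ} (hk : 0 < k) {b a : ℕ} (ha : a < k) : (b * k + a) / k = b := by
  rw [mul_comm, Nat.mul_add_div hk, Nat.div_eq_of_lt ha, add_zero]

lemma pred_mul_add {q : ℕ} (k : ℕ) (hq : 1 ≤ q) : (q - 1) * k + k = q * k := by
  calc (q - 1) * k + k = (q - 1 + 1) * k := (Nat.succ_mul _ _).symm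
    _ = q * k := by rw [show q - 1 + 1 = q by omega]

lemma mul_Esel_apply {k N m' : ℕ} (M : Matrix (Fin m') (Fin N) ℂ) (b : ℕ)
    (x : Fin m') (c : Fin k) (h : b * k + (c : ℕ) < N) :
    (M * Esel k N b) x c = M x ⟨b * k + c, h⟩ := by
  simp only [Matrix.mul_apply, Esel, Matrix.of_apply]
  rw [Finset.sum_eq_single (⟨b * k + c, h⟩ : Fin N)]
  · simp
  · intro j _ hj
    rw [if_neg fun hc => hj (Fin.ext hc), mul_zero]
  · simp

lemma EselH_mul_apply {k N m' : ℕ} (M : Matrix (Fin N) (Fin m') ℂ) (b : ℕ)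
    (r : Fin k) (x : Fin m') (h : b * k + (r : ℕ) < N) :
    ((Esel k N b)ᴴ * M) r x = M ⟨b * k + r, h⟩ x := by
  simp only [Matrix.mul_apply, Matrix.conjTranspose_apply, Esel, Matrix.of_apply]
  rw [Finset.sum_eq_single (⟨b * k + r, h⟩ : Fin N)]
  · simp
  · intro j _ hj
    rw [if_neg fun hc => hj (Fin.ext hc), star_zero, zero_mul]
  · simp

lemma EselLastH_mul_apply {k n ℓ m' : ℕ} (M : Matrix (Fin (n * k - ℓ)) (Fin m') ℂ)
    (r : Fin (k - ℓ)) (x : Fin m') (h : (n - 1) * k + (r : ℕ) < n * k - ℓ) :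
    ((EselLast k n ℓ)ᴴ * M) r x = M ⟨(n - 1) * k + r, h⟩ x := by
  simp only [Matrix.mul_apply, Matrix.conjTranspose_apply, EselLast, Matrix.of_apply]
  rw [Finset.sum_eq_single (⟨(n - 1) * k + r, h⟩ : Fin (n * k - ℓ))]
  · simp
  · intro j _ hj
    rw [if_neg fun hc => hj (Fin.ext hc), star_zero, zero_mul]
  · simp

lemma EselH_mulVec_apply {k N : ℕ} (b : ℕ) (u : Fin N → ℂ) (a : Fin k)
    (h : b * k + (a : ℕ) < N) :
    ((Esel k N b)ᴴ.mulVec u) a = u ⟨b * k + a, h⟩ := by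
  simp only [Matrix.mulVec, dotProduct, Matrix.conjTranspose_apply, Esel, Matrix.of_apply]
  rw [Finset.sum_eq_single (⟨b * k + a, h⟩ : Fin N)]
  · simp
  · intro j _ hj
    rw [if_neg fun hc => hj (Fin.ext hc), star_zero, zero_mul]
  · simp

lemma key {k n ℓ : ℕ} (hk : 1 ≤ k) (hn : 2 ≤ n) (hℓ : ℓ < k)
    (J : Matrix (Fin (n * k - ℓ)) (Fin (n * k - ℓ)) ℂ) (hJ : IsJkN k n ℓ J)
    (lam : ℝ) (v : Fin (n * k - ℓ) → ℂ)
    (hv : J.mulVec v = (lam : ℂ) • v)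
    (h0 : ∀ i : Fin (n * k - ℓ), (i : ℕ) < k → v i = 0) : v = 0 := by
  obtain ⟨hherm, hband, htri, p, hpmono, hpiv⟩ := hJ
  -- entrywise facts
  have hJtri : ∀ b : ℕ, b + 3 ≤ n → ∀ (rr cc : Fin k)
      (h1 : (b+1) * k + (rr : ℕ) < n * k - ℓ) (h2 : b * k + (cc : ℕ) < n * k - ℓ),
      (((cc : ℕ) < (rr : ℕ)) → J ⟨(b+1) * k + rr, h1⟩ ⟨b * k + cc, h2⟩ = 0) ∧
      ((rr : ℕ) = (cc : ℕ) → 0 < (J ⟨(b+1) * k + rr, h1⟩ ⟨b * k + cc, h2⟩).re ∧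
        (J ⟨(b+1) * k + rr, h1⟩ ⟨b * k + cc, h2⟩).im = 0) := by
    intro b hb rr cc h1 h2
    have h := htri b hb rr cc
    rw [mul_Esel_apply _ _ _ _ h2, EselH_mul_apply _ _ _ _ h1] at h
    exact ⟨h.1, fun hrc => h.2 (Fin.ext hrc)⟩
  have hJech : ∀ (cc : Fin (k - ℓ)) (jj : Fin k)
      (h1 : (n-1) * k + (cc : ℕ) < n * k - ℓ) (h2 : (n-2) * k + (jj : ℕ) < n * k - ℓ),
      (((jj : ℕ) < (p cc : ℕ)) → J ⟨(n-1) * k + cc, h1⟩ ⟨(n-2) * k + jj, h2⟩ = 0) ∧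
      ((jj : ℕ) = (p cc : ℕ) → 0 < (J ⟨(n-1) * k + cc, h1⟩ ⟨(n-2) * k + jj, h2⟩).re ∧
        (J ⟨(n-1) * k + cc, h1⟩ ⟨(n-2) * k + jj, h2⟩).im = 0) := by
    intro cc jj h1 h2
    have h := hpiv cc
    constructor
    · intro hlt
      have h3 := h.2 jj hlt
      rw [mul_Esel_apply _ _ _ _ h2, EselLastH_mul_apply _ _ _ h1] at h3
      exact h3
    · intro hje
      have hje' : jj = p cc := Fin.ext hje
      subst hje'
      have h3 := h.1
      rw [mul_Esel_apply _ _ _ _ h2, EselLastH_mul_apply _ _ _ h1] at h3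
      exact h3
  have hnk1 : (n-1) * k + k = n * k := pred_mul_add k (by omega)
  have hnk2 : (n-2) * k + k = (n-1) * k := by
    have h := pred_mul_add (q := n-1) k (by omega)
    rwa [show n - 1 - 1 = n - 2 by omega] at h
  funext i0
  show v i0 = 0
  suffices H : ∀ m : ℕ, ∀ i : Fin (n * k - ℓ), (i : ℕ) = m → v i = 0 from H i0 i0 rfl
  intro m
  induction m using Nat.strong_induction_on with
  | _ m IH =>
  intro i him
  by_cases hmk : m < k
  · exact h0 i (him ▸ hmk)
  push_neg at hmk
  have hiN : m < n * k - ℓ := him ▸ i.isLt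
  by_cases hml : m < (n-1) * k
  · -- Case A: middle blocks
    obtain ⟨q, a, ha, hma⟩ : ∃ q a, a < k ∧ m = q * k + a :=
      ⟨m / k, m % k, Nat.mod_lt _ hk, (Nat.div_add_mod' m k).symm⟩
    have hq1 : 1 ≤ q := by
      rcases Nat.eq_zero_or_pos q with h | h
      · subst h; simp only [zero_mul] at hma; omega
      · exact h
    have hq2 : q < n - 1 :=
      lt_of_mul_lt_mul_right (show q * k < (n - 1) * k by omega) (Nat.zero_le k)
    have hqk : (q-1) * k + k = q * k := pred_mul_add k hq1
    have hqq : (q-1+1) * k = q * k := by rw [show q - 1 + 1 = q by omega]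
    have hq2' : q * k ≤ (n-2) * k := Nat.mul_le_mul_right k (by omega)
    have hrN : (q-1) * k + a < n * k - ℓ := by omega
    set r : Fin (n * k - ℓ) := ⟨(q-1) * k + a, hrN⟩ with hrdef
    have heq := congrFun hv r
    simp only [Matrix.mulVec, dotProduct, Pi.smul_apply, smul_eq_mul] at heq
    have hvr : v r = 0 := IH ((q-1) * k + a) (by omega) r rfl
    have h1a : (q-1+1) * k + ((⟨a, ha⟩ : Fin k) : ℕ) < n * k - ℓ := by
      show (q-1+1) * k + a < n * k - ℓ
      omega
    have hii : i = ⟨(q-1+1) * k + ((⟨a, ha⟩ : Fin k) : ℕ), h1a⟩ := Fin.ext (by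
      show (i : ℕ) = (q-1+1) * k + a
      omega)
    have hdiag := (hJtri (q-1) (by omega) ⟨a, ha⟩ ⟨a, ha⟩ h1a hrN).2 rfl
    have hJri : J r i = star (J i r) := (hherm.apply r i).symm
    have hsum : ∑ j, J r j * v j = J r i * v i := by
      apply Finset.sum_eq_single
      · intro j _ hj
        have hjne : (j : ℕ) ≠ m := fun hc => hj (Fin.ext (by rw [hc, him]))
        rcases lt_or_gt_of_ne hjne with hlt | hgt
        · rw [IH _ hlt j rfl, mul_zero]
        · have hjN := j.isLt
          have hzero : J r j = 0 := by
            by_cases hjq : (j : ℕ) < q * k + k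
            · -- block q, column index c > a
              have hcb : (j : ℕ) - q * k < k := by omega
              have hca : a < (j : ℕ) - q * k := by omega
              have h1c : (q-1+1) * k + ((⟨(j : ℕ) - q * k, hcb⟩ : Fin k) : ℕ) < n * k - ℓ := by
                show (q-1+1) * k + ((j : ℕ) - q * k) < n * k - ℓ
                omega
              have hz := (hJtri (q-1) (by omega) ⟨(j : ℕ) - q * k, hcb⟩ ⟨a, ha⟩ h1c hrN).1 hca
              have hjeq : j = ⟨(q-1+1) * k + ((⟨(j : ℕ) - q * k, hcb⟩ : Fin k) : ℕ), h1c⟩ := by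
                apply Fin.ext
                show (j : ℕ) = (q-1+1) * k + ((j : ℕ) - q * k)
                omega
              rw [hjeq, ← hherm.apply, hz, star_zero]
            · -- far blocks
              apply hband r j
              left
              have hrdiv : ((r : Fin (n * k - ℓ)) : ℕ) / k = q - 1 := by
                show ((q-1) * k + a) / k = q - 1
                exact div_eq hk ha
              have hjdiv : q + 1 ≤ (j : ℕ) / k := by
                rw [Nat.le_div_iff_mul_le hk]
                calc (q + 1) * k = q * k + k := by rw [Nat.succ_mul]
                  _ ≤ (j : ℕ) := by omega
              rw [hrdiv]
              omega
          rw [hzero, zero_mul]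
      · simp
    rw [hsum, hvr, mul_zero] at heq
    have hne : J r i ≠ 0 := by
      rw [hJri]
      intro hz
      have : J i r = 0 := by
        have := congrArg star hz
        rwa [star_star, star_zero] at this
      rw [hii] at this
      rw [this] at hdiag
      simp at hdiag
    rcases mul_eq_zero.mp heq with h | h
    · exact absurd h hne
    · exact h
  · -- Case B: last block
    push_neg at hml
    have hc : m - (n-1) * k < k - ℓ := by omega
    set cfin : Fin (k - ℓ) := ⟨m - (n-1) * k, hc⟩ with hcdef
    have hpk := (p cfin).isLt
    have hrN : (n-2) * k + ((p cfin : ℕ)) < n * k - ℓ := by omega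
    set r : Fin (n * k - ℓ) := ⟨(n-2) * k + (p cfin : ℕ), hrN⟩ with hrdef
    have heq := congrFun hv r
    simp only [Matrix.mulVec, dotProduct, Pi.smul_apply, smul_eq_mul] at heq
    have hvr : v r = 0 := IH ((n-2) * k + (p cfin : ℕ)) (by omega) r rfl
    have h1c : (n-1) * k + ((cfin : Fin (k - ℓ)) : ℕ) < n * k - ℓ := by
      show (n-1) * k + (m - (n-1) * k) < n * k - ℓ
      omega
    have hii : i = ⟨(n-1) * k + (cfin : ℕ), h1c⟩ := Fin.ext (by
      show (i : ℕ) = (n-1) * k + (m - (n-1) * k)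
      omega)
    have hdiag := (hJech cfin (p cfin) h1c hrN).2 rfl
    have hJri : J r i = star (J i r) := (hherm.apply r i).symm
    have hsum : ∑ j, J r j * v j = J r i * v i := by
      apply Finset.sum_eq_single
      · intro j _ hj
        have hjne : (j : ℕ) ≠ m := fun hcx => hj (Fin.ext (by rw [hcx, him]))
        rcases lt_or_gt_of_ne hjne with hlt | hgt
        · rw [IH _ hlt j rfl, mul_zero]
        · have hjN := j.isLt
          have hzero : J r j = 0 := by
            have hcb : (j : ℕ) - (n-1) * k < k - ℓ := by omega
            have hcc : (cfin : ℕ) < ((⟨(j : ℕ) - (n-1) * k, hcb⟩ : Fin (k - ℓ)) : ℕ) := by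
              show m - (n-1) * k < (j : ℕ) - (n-1) * k
              omega
            have hplt : (p cfin : ℕ) < (p ⟨(j : ℕ) - (n-1) * k, hcb⟩ : ℕ) := hpmono hcc
            have h1j : (n-1) * k + ((⟨(j : ℕ) - (n-1) * k, hcb⟩ : Fin (k - ℓ)) : ℕ) < n * k - ℓ := by
              show (n-1) * k + ((j : ℕ) - (n-1) * k) < n * k - ℓ
              omega
            have hz := (hJech ⟨(j : ℕ) - (n-1) * k, hcb⟩ (p cfin) h1j hrN).1 hplt
            have hjeq : j = ⟨(n-1) * k + ((⟨(j : ℕ) - (n-1) * k, hcb⟩ : Fin (k - ℓ)) : ℕ), h1j⟩ := by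
              apply Fin.ext
              show (j : ℕ) = (n-1) * k + ((j : ℕ) - (n-1) * k)
              omega
            rw [hjeq, ← hherm.apply, hz, star_zero]
          rw [hzero, zero_mul]
      · simp
    rw [hsum, hvr, mul_zero] at heq
    have hne : J r i ≠ 0 := by
      rw [hJri]
      intro hz
      have : J i r = 0 := by
        have := congrArg star hz
        rwa [star_star, star_zero] at this
      rw [hii] at this
      rw [this] at hdiag
      simp at hdiag
    rcases mul_eq_zero.mp heq with h | h
    · exact absurd h hne
    · exact h

/-- For `J ∈ 𝒥_{k,N}`, the map sending an eigenvector to its first `k`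
coordinates `E_1^* v` is injective on each eigenspace; consequently, linearly independent
eigenvectors for a common eigenvalue have linearly independent first-`k`-coordinate
vectors, and every eigenvalue of `J` has multiplicity at most `k`. -/
theorem firstBlock_injective_on_eigenspaces
    (k n ℓ : ℕ) (hk : 1 ≤ k) (hn : 2 ≤ n) (hℓ : ℓ < k)
    (J : Matrix (Fin (n * k - ℓ)) (Fin (n * k - ℓ)) ℂ) (hJ : IsJkN k n ℓ J) :
    (∀ (lam : ℝ) (v w : Fin (n * k - ℓ) → ℂ),
        J.mulVec v = (lam : ℂ) • v → J.mulVec w = (lam : ℂ) • w →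
        (Esel k (n * k - ℓ) 0)ᴴ.mulVec v = (Esel k (n * k - ℓ) 0)ᴴ.mulVec w → v = w) ∧
    (∀ (lam : ℝ) (p : ℕ) (vhat : Fin p → (Fin (n * k - ℓ) → ℂ)),
        (∀ i, J.mulVec (vhat i) = (lam : ℂ) • vhat i) →
        LinearIndependent ℂ vhat →
        LinearIndependent ℂ (fun i => (Esel k (n * k - ℓ) 0)ᴴ.mulVec (vhat i))) ∧
    (∀ lam : ℝ,
        Module.finrank ℂ (Module.End.eigenspace (Matrix.toLin' J) ((lam : ℂ))) ≤ k) := by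
  
  have hnk1 : (n - 1) * k + k = n * k := pred_mul_add k (by omega)
  have hkN : k ≤ n * k - ℓ := by
    have h2 : k ≤ (n - 1) * k := Nat.le_mul_of_pos_left k (by omega)
    omega
  have part1 : ∀ (lam : ℝ) (v w : Fin (n * k - ℓ) → ℂ),
      J.mulVec v = (lam : ℂ) • v → J.mulVec w = (lam : ℂ) • w →
      (Esel k (n * k - ℓ) 0)ᴴ.mulVec v = (Esel k (n * k - ℓ) 0)ᴴ.mulVec w → v = w := by
    intro lam v w hv hw hE
    have h := key hk hn hℓ J hJ lam (v - w)
      (by rw [Matrix.mulVec_sub, hv, hw, smul_sub])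
      (by
        intro i hik
        have ha : 0 * k + (((⟨(i : ℕ), hik⟩ : Fin k)) : ℕ) < n * k - ℓ := by
          simpa using i.isLt
        have hEi := congrFun hE (⟨(i : ℕ), hik⟩ : Fin k)
        rw [EselH_mulVec_apply 0 v _ ha, EselH_mulVec_apply 0 w _ ha] at hEi
        have hieq : i = (⟨0 * k + (((⟨(i : ℕ), hik⟩ : Fin k)) : ℕ), ha⟩ : Fin (n * k - ℓ)) :=
          Fin.ext (by simp)
        simp only [Pi.sub_apply]
        rw [hieq]
        exact sub_eq_zero.mpr hEi)
    exact sub_eq_zero.mp h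
  refine ⟨part1, ?_, ?_⟩
  · intro lam q vhat heig hli
    rw [Fintype.linearIndependent_iff]
    intro g hg j0
    have hlin : ∀ (M : Matrix (Fin (n * k - ℓ)) (Fin (n * k - ℓ)) ℂ)
        (M' : Matrix (Fin k) (Fin (n * k - ℓ)) ℂ),
        M.mulVec (∑ j, g j • vhat j) = ∑ j, g j • M.mulVec (vhat j) ∧
        M'.mulVec (∑ j, g j • vhat j) = ∑ j, g j • M'.mulVec (vhat j) := by
      intro M M'
      constructor <;>
        simp only [← Matrix.mulVecLin_apply, map_sum, _root_.map_smul]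
    have hJu : J.mulVec (∑ j, g j • vhat j) = (lam : ℂ) • ∑ j, g j • vhat j := by
      rw [(hlin J 0).1, Finset.smul_sum]
      refine Finset.sum_congr rfl fun j _ => ?_
      rw [heig j, smul_comm]
    have hu0 : (Esel k (n * k - ℓ) 0)ᴴ.mulVec (∑ j, g j • vhat j) = 0 := by
      rw [(hlin 0 ((Esel k (n * k - ℓ) 0)ᴴ)).2]
      exact hg
    have hzero := key hk hn hℓ J hJ lam (∑ j, g j • vhat j) hJu (by
      intro i hik
      have ha : 0 * k + (((⟨(i : ℕ), hik⟩ : Fin k)) : ℕ) < n * k - ℓ := by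
        simpa using i.isLt
      have hEi := congrFun hu0 (⟨(i : ℕ), hik⟩ : Fin k)
      rw [EselH_mulVec_apply 0 _ _ ha] at hEi
      have hieq : i = (⟨0 * k + (((⟨(i : ℕ), hik⟩ : Fin k)) : ℕ), ha⟩ : Fin (n * k - ℓ)) :=
        Fin.ext (by simp)
      rw [hieq]
      exact hEi)
    exact Fintype.linearIndependent_iff.mp hli g hzero j0
  · intro lam
    let f : (Module.End.eigenspace (Matrix.toLin' J) ((lam : ℂ))) →ₗ[ℂ] (Fin k → ℂ) :=
      ((Esel k (n * k - ℓ) 0)ᴴ.mulVecLin).comp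
        (Module.End.eigenspace (Matrix.toLin' J) ((lam : ℂ))).subtype
    have hinj : Function.Injective f := by
      intro x y hxy
      have hx := Module.End.mem_eigenspace_iff.mp x.2
      have hy := Module.End.mem_eigenspace_iff.mp y.2
      rw [Matrix.toLin'_apply] at hx hy
      exact Subtype.ext (part1 lam x y hx hy
        (by simpa [f, Matrix.mulVecLin_apply] using hxy))
    calc Module.finrank ℂ (Module.End.eigenspace (Matrix.toLin' J) ((lam : ℂ)))
        ≤ Module.finrank ℂ (Fin k → ℂ) := LinearMap.finrank_le_finrank_of_injective hinj
      _ = k := Module.finrank_fin_fun ℂ
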